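/- Let ε₁, ε₂, ε₃, ε₄, ε₅ ∈ ℕ and consider the formal power series f := (1+t)^{ε₁}·(1+t³)^{ε₃}·(1+t⁵)^{ε₅}·((1−t²)^{ε₂}·(1−t⁴)^{ε₄})^{−1} ∈ ℤ⟦t⟧. Writing β_i for the coefficient of t^i in f, the following hold: β₀ = 1; β₁ = ε₁; β₂ = ε₂ + C(ε₁,2); β₃ = ε₃ + ε₂ε₁ + C(ε₁,3); β₄ = ε₄ + ε₃ε₁ + C(ε₂+1,2) + ε₂·C(ε₁,2) + C(ε₁,4); and β₅ = ε₅ + ε₄ε₁ + ε₃ε₂ + ε₃·C(ε₁,2) + ε₂²ε₁ − ε₁·C(ε₂,2) + ε₂·C(ε₁,3) + C(ε₁,5), where C(m,r) denotes the binomial coefficient. (These are exactly the relations between the first five Betti numbers and the first five deviations of a local ring, since the factors of the deviation product formula of index ≥ 6 do not affect coefficients in degrees ≤ 5; the formula for β₄ corrects the one in Avramov's 'Infinite free resolutions'.) -/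

import Mathlib

open PowerSeries Finset

lemma coeff_aux (a : ℤ) (k n m : ℕ) (hk : 0 < k) :
    PowerSeries.coeff m ((1 + PowerSeries.C a * PowerSeries.X ^ k) ^ n) =
      if k ∣ m then a ^ (m / k) * n.choose (m / k) else 0 := by
  rw [add_comm, add_pow, map_sum]
  have hterm : ∀ j, (PowerSeries.coeff m)
      ((PowerSeries.C a * PowerSeries.X ^ k) ^ j * 1 ^ (n - j) * (n.choose j : PowerSeries ℤ))
      = if m = k * j then a ^ j * n.choose j else 0 := by
    intro j
    have : (PowerSeries.C a * PowerSeries.X ^ k) ^ j * 1 ^ (n - j) * (n.choose j : PowerSeries ℤ)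
        = PowerSeries.C (a ^ j * n.choose j) * PowerSeries.X ^ (k * j) := by
      rw [one_pow, mul_one, mul_pow, ← pow_mul, map_mul, map_pow]
      rw [← map_natCast (PowerSeries.C (R := ℤ)) (n.choose j)]
      ring
    rw [this, PowerSeries.coeff_C_mul, PowerSeries.coeff_X_pow]
    split <;> simp
  by_cases hdvd : k ∣ m
  · obtain ⟨q, rfl⟩ := hdvd
    rw [if_pos ⟨q, rfl⟩, Nat.mul_div_cancel_left q hk]
    by_cases hq : q ∈ Finset.range (n + 1)
    · rw [Finset.sum_eq_single q]
      · rw [hterm, if_pos rfl]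
      · intro j hj hne
        rw [hterm, if_neg]
        exact fun h => hne (Nat.eq_of_mul_eq_mul_left hk h.symm)
      · exact fun h => absurd hq h
    · rw [Finset.sum_eq_zero]
      · have : n.choose q = 0 := Nat.choose_eq_zero_of_lt (by simpa using hq)
        simp [this]
      · intro j hj
        rw [hterm, if_neg]
        intro h
        have hqj : q = j := Nat.eq_of_mul_eq_mul_left hk h
        have := Finset.mem_range.mp hj
        exact (Finset.mem_range.not.mp hq) (by omega)
  · rw [if_neg hdvd, Finset.sum_eq_zero]
    intro j hj
    rw [hterm, if_neg]
    exact fun h => hdvd ⟨j, h⟩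

lemma cA (n m : ℕ) : PowerSeries.coeff m ((1 + PowerSeries.X) ^ n) = (n.choose m : ℤ) := by
  have e : (1 : PowerSeries ℤ) + PowerSeries.X = 1 + PowerSeries.C 1 * PowerSeries.X ^ 1 := by
    simp
  rw [e, coeff_aux 1 1 n m one_pos]
  simp

lemma cP (k : ℕ) (hk : 0 < k) (n m : ℕ) :
    PowerSeries.coeff m ((1 + PowerSeries.X ^ k) ^ n) =
      if k ∣ m then (n.choose (m / k) : ℤ) else 0 := by
  have e : (1 : PowerSeries ℤ) + PowerSeries.X ^ k
      = 1 + PowerSeries.C 1 * PowerSeries.X ^ k := by simp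
  rw [e, coeff_aux 1 k n m hk]
  simp

lemma cM (k : ℕ) (hk : 0 < k) (n m : ℕ) :
    PowerSeries.coeff m ((1 - PowerSeries.X ^ k) ^ n) =
      if k ∣ m then (-1) ^ (m / k) * (n.choose (m / k) : ℤ) else 0 := by
  have e : (1 : PowerSeries ℤ) - PowerSeries.X ^ k
      = 1 + PowerSeries.C (-1) * PowerSeries.X ^ k := by
    simp [sub_eq_add_neg]
  rw [e, coeff_aux (-1) k n m hk]


lemma two_choose_sq (n : ℕ) : (n : ℤ) ^ 2 = 2 * (n.choose 2 : ℤ) + n := by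
  rcases n with _ | m
  · simp
  · have hdvd : 2 ∣ (m + 1) * m := by
      rw [Nat.mul_comm]; exact (Nat.even_mul_succ_self m).two_dvd
    have hn : (m + 1).choose 2 * 2 = (m + 1) * m := by
      rw [Nat.choose_two_right, Nat.succ_sub_one, Nat.div_mul_cancel hdvd]
    have hc := congrArg (Nat.cast : ℕ → ℤ) hn
    push_cast at hc ⊢
    linarith

/-- For `ε₁,…,ε₅ ∈ ℕ`, let
`f := (1+t)^{ε₁}(1+t³)^{ε₃}(1+t⁵)^{ε₅} / ((1−t²)^{ε₂}(1−t⁴)^{ε₄}) ∈ ℤ⟦t⟧`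
(characterized by `f · (1−t²)^{ε₂}(1−t⁴)^{ε₄} = (1+t)^{ε₁}(1+t³)^{ε₃}(1+t⁵)^{ε₅}`,
the denominator having constant coefficient `1`). Writing `β_i` for the coefficient of
`t^i` in `f`: `β₀ = 1`, `β₁ = ε₁`, `β₂ = ε₂ + C(ε₁,2)`, `β₃ = ε₃ + ε₂ε₁ + C(ε₁,3)`,
`β₄ = ε₄ + ε₃ε₁ + C(ε₂+1,2) + ε₂C(ε₁,2) + C(ε₁,4)`, and
`β₅ = ε₅ + ε₄ε₁ + ε₃ε₂ + ε₃C(ε₁,2) + ε₂²ε₁ − ε₁C(ε₂,2) + ε₂C(ε₁,3) + C(ε₁,5)`. -/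
theorem stmt_13 (ε₁ ε₂ ε₃ ε₄ ε₅ : ℕ) (f : PowerSeries ℤ)
    (hf : f * ((1 - PowerSeries.X ^ 2) ^ ε₂ * (1 - PowerSeries.X ^ 4) ^ ε₄) =
      (1 + PowerSeries.X) ^ ε₁ * (1 + PowerSeries.X ^ 3) ^ ε₃ *
        (1 + PowerSeries.X ^ 5) ^ ε₅) :
    PowerSeries.coeff 0 f = 1 ∧
      PowerSeries.coeff 1 f = (ε₁ : ℤ) ∧
      PowerSeries.coeff 2 f = (ε₂ : ℤ) + (ε₁.choose 2 : ℤ) ∧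
      PowerSeries.coeff 3 f = (ε₃ : ℤ) + (ε₂ : ℤ) * (ε₁ : ℤ) + (ε₁.choose 3 : ℤ) ∧
      PowerSeries.coeff 4 f = (ε₄ : ℤ) + (ε₃ : ℤ) * (ε₁ : ℤ) +
        ((ε₂ + 1).choose 2 : ℤ) + (ε₂ : ℤ) * (ε₁.choose 2 : ℤ) + (ε₁.choose 4 : ℤ) ∧
      PowerSeries.coeff 5 f = (ε₅ : ℤ) + (ε₄ : ℤ) * (ε₁ : ℤ) + (ε₃ : ℤ) * (ε₂ : ℤ) +
        (ε₃ : ℤ) * (ε₁.choose 2 : ℤ) + (ε₂ : ℤ) ^ 2 * (ε₁ : ℤ) -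
        (ε₁ : ℤ) * (ε₂.choose 2 : ℤ) + (ε₂ : ℤ) * (ε₁.choose 3 : ℤ) +
        (ε₁.choose 5 : ℤ) := by
  have h := fun n => congrArg (PowerSeries.coeff n) hf
  have h0 := h 0
  have h1 := h 1
  have h2 := h 2
  have h3 := h 3
  have h4 := h 4
  have h5 := h 5
  simp only [PowerSeries.coeff_mul, Finset.Nat.sum_antidiagonal_eq_sum_range_succ_mk,
    Finset.sum_range_succ, Finset.sum_range_zero] at h0 h1 h2 h3 h4 h5
  norm_num [cA, cP 3 (by norm_num), cP 5 (by norm_num), cM 2 (by norm_num),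
    cM 4 (by norm_num)] at h0 h1 h2 h3 h4 h5
  have hc2 : ((ε₂ + 1).choose 2 : ℤ) = (ε₂.choose 2 : ℤ) + ε₂ := by
    rw [Nat.choose_succ_succ]
    push_cast [Nat.choose_one_right]
    ring
  have hc2' := two_choose_sq ε₂
  refine ⟨?_, ?_, ?_, ?_, ?_, ?_⟩
  · rw [PowerSeries.coeff_zero_eq_constantCoeff]; exact h0
  · exact h1
  · linear_combination h2 + (ε₂ : ℤ) * h0
  · linear_combination h3 + (ε₂ : ℤ) * h1
  · linear_combination h4 + (ε₂ : ℤ) * h2 +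
      ((ε₄ : ℤ) - (ε₂.choose 2 : ℤ) + (ε₂ : ℤ) ^ 2) * h0 - hc2 + hc2'
  · linear_combination h5 + (ε₂ : ℤ) * h3 +
      ((ε₄ : ℤ) - (ε₂.choose 2 : ℤ) + (ε₂ : ℤ) ^ 2) * h1
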